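/- Explicit projection onto the Coulomb cone in the sliding regime: let μ ≥ 0 and let τ ∈ E satisfy τ_t ≠ 0, ‖τ_t‖ ≥ μ * τ_n and μ * ‖τ_t‖ ≥ -τ_n. Then the point p = τ - ((‖τ_t‖ - μ * τ_n)/(1 + μ^2)) • ((1/‖τ_t‖) • τ_t - μ • n) is the orthogonal projection of τ onto K_μ; that is, p ∈ K_μ and for every s ∈ K_μ one has ‖τ - p‖ ≤ ‖τ - s‖. -/

import Mathlib

set_option maxHeartbeats 1000000


open scoped InnerProductSpace

noncomputable section

/-- The ambient space `E = ℝ³`. -/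
abbrev E := EuclideanSpace ℝ (Fin 3)

/-- Normal component of `x` relative to the unit normal `n`. -/
def xn (n x : E) : ℝ := ⟪x, n⟫_ℝ

/-- Tangential component of `x` relative to the unit normal `n`. -/
def xt (n x : E) : E := x - (⟪x, n⟫_ℝ) • n

/-- The Coulomb cone with friction coefficient `μ`. -/
def Kcone (n : E) (μ : ℝ) : Set E := {r | ‖xt n r‖ ≤ μ * xn n r}

/-- Explicit orthogonal projection onto the Coulomb cone in the sliding regime. -/
theorem coulomb_projection_sliding (n : E) (hn : ‖n‖ = 1) (μ : ℝ) (hμ : 0 ≤ μ)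
    (τ : E) (hτt : xt n τ ≠ 0)
    (h1 : μ * xn n τ ≤ ‖xt n τ‖) (h2 : -(xn n τ) ≤ μ * ‖xt n τ‖) :
    τ - ((‖xt n τ‖ - μ * xn n τ) / (1 + μ ^ 2)) • ((1 / ‖xt n τ‖) • xt n τ - μ • n)
      ∈ Kcone n μ ∧
    ∀ s ∈ Kcone n μ,
      ‖τ - (τ - ((‖xt n τ‖ - μ * xn n τ) / (1 + μ ^ 2)) •
          ((1 / ‖xt n τ‖) • xt n τ - μ • n))‖ ≤ ‖τ - s‖ := by
  set t : E := xt n τ with ht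
  set a : ℝ := ‖t‖ with ha
  set b : ℝ := xn n τ with hb
  have ha0 : 0 < a := norm_pos_iff.mpr hτt
  have ha' : a ≠ 0 := ne_of_gt ha0
  have hnn : ⟪n, n⟫_ℝ = 1 := by
    rw [real_inner_self_eq_norm_sq, hn]; norm_num
  have htn : ⟪t, n⟫_ℝ = 0 := by
    rw [ht, xt, inner_sub_left, real_inner_smul_left, hnn]; ring
  have hden : (0:ℝ) < 1 + μ ^ 2 := by positivity
  set α : ℝ := (a - μ * b) / (1 + μ ^ 2) with hα
  have hα0 : 0 ≤ α := div_nonneg (by linarith) hden.le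
  have hαle : α ≤ a := by
    rw [hα, div_le_iff₀ hden]
    nlinarith [mul_nonneg hμ (by nlinarith : (0:ℝ) ≤ μ * a + b)]
  set d : E := (1 / a) • t - μ • n with hd
  set p : E := τ - α • d with hp
  have hdn : ⟪d, n⟫_ℝ = -μ := by
    rw [hd, inner_sub_left, real_inner_smul_left, real_inner_smul_left, htn, hnn]; ring
  have hpn : xn n p = b + α * μ := by
    simp only [hp, xn, inner_sub_left, real_inner_smul_left, hdn, ← hb]
    rw [show ⟪τ, n⟫_ℝ = b from rfl]; ring
  have hτeq : τ = t + b • n := by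
    simp [ht, xt, hb, xn]
  have hpt : xt n p = (1 - α / a) • t := by
    have h1' : xt n p = p - (b + α * μ) • n := by
      rw [xt, show ⟪p, n⟫_ℝ = b + α * μ from hpn]
    rw [h1', hp, hd, hτeq]
    match_scalars <;> field_simp <;> ring
  have hptn : ‖xt n p‖ = a - α := by
    rw [hpt, norm_smul, Real.norm_eq_abs, abs_of_nonneg (by
      rw [sub_nonneg, div_le_one ha0]; exact hαle)]
    field_simp
    rw [← ha]; ring
  have hαeq : a - α = μ * (b + α * μ) := by
    rw [hα]; field_simp; ring
  constructor
  · show ‖xt n p‖ ≤ μ * xn n p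
    rw [hptn, hpn, hαeq]
  · intro s hs
    have hsK : ‖xt n s‖ ≤ μ * xn n s := hs
    have hseq : s = xt n s + (xn n s) • n := by simp [xt, xn]
    have hts : ⟪t, s⟫_ℝ ≤ a * ‖xt n s‖ := by
      calc ⟪t, s⟫_ℝ = ⟪t, xt n s⟫_ℝ := by
            conv_lhs => rw [hseq]
            rw [inner_add_right, real_inner_smul_right, htn]; ring
        _ ≤ a * ‖xt n s‖ := by
            simpa [ha] using real_inner_le_norm t (xt n s)
    have hns : ⟪n, s⟫_ℝ = xn n s := (real_inner_comm n s).symm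
    have hds : ⟪d, s⟫_ℝ ≤ 0 := by
      rw [hd, inner_sub_left, real_inner_smul_left, real_inner_smul_left, hns]
      have h3 : (1 / a) * ⟪t, s⟫_ℝ ≤ ‖xt n s‖ := by
        rw [div_mul_eq_mul_div, one_mul, div_le_iff₀ ha0]
        nlinarith
      nlinarith
    have htp : ⟪t, p⟫_ℝ = (1 - α / a) * a ^ 2 := by
      have hpeq : p = (1 - α / a) • t + (b + α * μ) • n := by
        rw [hp, hd, hτeq]; match_scalars <;> field_simp <;> ring
      rw [hpeq, inner_add_right, real_inner_smul_right, real_inner_smul_right, htn,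
        real_inner_self_eq_norm_sq, ← ha]
      ring
    have hnp : ⟪n, p⟫_ℝ = b + α * μ := by rw [real_inner_comm]; exact hpn
    have hdp : ⟪d, p⟫_ℝ = 0 := by
      rw [hd, inner_sub_left, real_inner_smul_left, real_inner_smul_left, htp, hnp]
      have : (1 / a) * ((1 - α / a) * a ^ 2) = a - α := by field_simp
      rw [this]
      linarith [hαeq]
    have hτp : τ - p = α • d := by rw [hp]; abel
    have key : ⟪τ - p, s - p⟫_ℝ ≤ 0 := by
      rw [hτp, inner_sub_right, real_inner_smul_left, real_inner_smul_left, hdp]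
      nlinarith [mul_nonneg hα0 (neg_nonneg.mpr hds)]
    have hexp : ‖τ - s‖ ^ 2 = ‖τ - p‖ ^ 2 - 2 * ⟪τ - p, s - p⟫_ℝ + ‖s - p‖ ^ 2 := by
      have : τ - s = (τ - p) - (s - p) := by abel
      rw [this, norm_sub_sq_real]
    nlinarith [norm_nonneg (τ - s), norm_nonneg (τ - p), sq_nonneg (‖s - p‖)]
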